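/- Separation propagates under inflation: let α_max > 0. If y, z ∈ ℝ^d satisfy |y − z| > R + ‖Q^{−k}‖·α_max, then for all digits d₁, d₂ ∈ ⋃_{i,j ≤ m} (D^k)_{ij} one has |(Q^k y + d₁) − (Q^k z + d₂)| > R + α_max; in particular the distance still exceeds R + ‖Q^{−k}‖·α_max. -/

import Mathlib

open Pointwise Set

noncomputable section

/-- Iterated digit sets: `iterD Q D n i j` is `(Dⁿ)_{ij}`. -/
def iterD {E : Type*} [AddCommGroup E] {m : ℕ}
    (Q : E → E) (D : Fin m → Fin m → Set E) : ℕ → Fin m → Fin m → Set E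
  | 0 => fun i j => if i = j then {0} else ∅
  | n + 1 => fun i j => ⋃ l : Fin m, D i l + Q '' iterD Q D n l j

/-- separation propagates under inflation: if `|y − z| > R + ‖Q^{−k}‖·α_max`,
then for all digits `d₁, d₂ ∈ ⋃_{i,j}(D^k)_{ij}`,
`|(Q^k y + d₁) − (Q^k z + d₂)| > R + α_max > R + ‖Q^{−k}‖·α_max`. -/
theorem stmt_7 (d m k : ℕ) (hd : 1 ≤ d) (hm : 1 ≤ m) (hk : 1 ≤ k)
    (Q : EuclideanSpace ℝ (Fin d) ≃L[ℝ] EuclideanSpace ℝ (Fin d))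
    (hQk : ‖(Q.symm : EuclideanSpace ℝ (Fin d) →L[ℝ] EuclideanSpace ℝ (Fin d)) ^ k‖ < 1)
    (D : Fin m → Fin m → Set (EuclideanSpace ℝ (Fin d)))
    (hDfin : ∀ i j, (D i j).Finite)
    (e : ℝ)
    (he : e = sSup {t : ℝ | ∃ i j i' j' : Fin m,
      ∃ x ∈ iterD (⇑Q) D k i j, ∃ y ∈ iterD (⇑Q) D k i' j', t = ‖x - y‖})
    (R : ℝ)
    (hR : R = e * ‖(Q.symm : EuclideanSpace ℝ (Fin d) →L[ℝ] EuclideanSpace ℝ (Fin d)) ^ k‖ /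
      (1 - ‖(Q.symm : EuclideanSpace ℝ (Fin d) →L[ℝ] EuclideanSpace ℝ (Fin d)) ^ k‖))
    (αmax : ℝ) (hα : 0 < αmax)
    (y z : EuclideanSpace ℝ (Fin d))
    (hyz : R + ‖(Q.symm : EuclideanSpace ℝ (Fin d) →L[ℝ] EuclideanSpace ℝ (Fin d)) ^ k‖ * αmax
      < ‖y - z‖) :
    ∀ d₁ ∈ ⋃ i, ⋃ j, iterD (⇑Q) D k i j, ∀ d₂ ∈ ⋃ i, ⋃ j, iterD (⇑Q) D k i j,
      R + αmax < ‖((⇑Q)^[k] y + d₁) - ((⇑Q)^[k] z + d₂)‖ ∧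
      R + ‖(Q.symm : EuclideanSpace ℝ (Fin d) →L[ℝ] EuclideanSpace ℝ (Fin d)) ^ k‖ * αmax
        < ‖((⇑Q)^[k] y + d₁) - ((⇑Q)^[k] z + d₂)‖ := by
  intro d₁ hd₁ d₂ hd₂
  set A := (Q.symm : EuclideanSpace ℝ (Fin d) →L[ℝ] EuclideanSpace ℝ (Fin d)) with hA
  set N := ‖A ^ k‖ with hNdef
  -- finiteness of iterated digit sets
  have hfin : ∀ n i j, (iterD (⇑Q) D n i j).Finite := by
    intro n
    induction n with
    | zero =>
      intro i j; dsimp [iterD]; split <;> simp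
    | succ n ih =>
      intro i j
      exact Set.finite_iUnion fun l => (hDfin i l).add ((ih l j).image _)
  have hUfin : (⋃ i, ⋃ j, iterD (⇑Q) D k i j).Finite :=
    Set.finite_iUnion fun i => Set.finite_iUnion fun j => hfin k i j
  set U := ⋃ i, ⋃ j, iterD (⇑Q) D k i j with hU
  set S := {t : ℝ | ∃ i j i' j' : Fin m,
      ∃ x ∈ iterD (⇑Q) D k i j, ∃ y ∈ iterD (⇑Q) D k i' j', t = ‖x - y‖} with hS
  have hSsub : S ⊆ (fun p : EuclideanSpace ℝ (Fin d) × EuclideanSpace ℝ (Fin d) => ‖p.1 - p.2‖) '' (U ×ˢ U) := by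
    rintro t ⟨i, j, i', j', x, hx, y', hy', rfl⟩
    exact ⟨(x, y'), ⟨mem_iUnion.mpr ⟨i, mem_iUnion.mpr ⟨j, hx⟩⟩,
      mem_iUnion.mpr ⟨i', mem_iUnion.mpr ⟨j', hy'⟩⟩⟩, rfl⟩
  have hSfin : S.Finite := (((hUfin.prod hUfin).image _).subset hSsub)
  have hSbdd : BddAbove S := hSfin.bddAbove
  obtain ⟨i₁, hi₁⟩ := mem_iUnion.mp hd₁
  obtain ⟨j₁, hj₁⟩ := mem_iUnion.mp hi₁
  obtain ⟨i₂, hi₂⟩ := mem_iUnion.mp hd₂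
  obtain ⟨j₂, hj₂⟩ := mem_iUnion.mp hi₂
  have h0S : (0 : ℝ) ∈ S := ⟨i₁, j₁, i₁, j₁, d₁, hj₁, d₁, hj₁, by simp⟩
  have he0 : 0 ≤ e := by rw [he]; exact le_csSup hSbdd h0S
  have hde : ‖d₁ - d₂‖ ≤ e := by
    rw [he]; exact le_csSup hSbdd ⟨i₁, j₁, i₂, j₂, d₁, hj₁, d₂, hj₂, rfl⟩
  -- iterate of Q preserves subtraction
  have hQsub : ∀ n : ℕ, ∀ a b : EuclideanSpace ℝ (Fin d), (⇑Q)^[n] (a - b) = (⇑Q)^[n] a - (⇑Q)^[n] b := by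
    intro n
    induction n with
    | zero => intro a b; simp
    | succ n ih =>
      intro a b
      simp [Function.iterate_succ_apply', ih, map_sub]
  -- A^k is a left inverse of Q^[k]
  have hAk : ∀ v : EuclideanSpace ℝ (Fin d), (A ^ k) ((⇑Q)^[k] v) = v := by
    intro v
    have hcoe : ⇑(A ^ k) = (⇑Q.symm)^[k] := by
      rw [hA]; exact FunLike.coe_pow_eq_iterate _ k
    rw [hcoe]
    exact (Function.LeftInverse.iterate (fun x => Q.symm_apply_apply x) k) v
  have hle : ‖y - z‖ ≤ N * ‖(⇑Q)^[k] (y - z)‖ := by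
    calc ‖y - z‖ = ‖(A ^ k) ((⇑Q)^[k] (y - z))‖ := by rw [hAk]
    _ ≤ N * ‖(⇑Q)^[k] (y - z)‖ := (A ^ k).le_opNorm _
  have hN1 : N < 1 := hQk
  have hNnn : 0 ≤ N := norm_nonneg _
  have hR0 : 0 ≤ R := by
    rw [hR]; exact div_nonneg (mul_nonneg he0 hNnn) (by linarith)
  have hN0 : 0 < N := by
    rcases hNnn.lt_or_eq with h | h
    · exact h
    · exfalso
      rw [← h] at hle; simp only [zero_mul] at hle
      have h0 : ‖y - z‖ = 0 := le_antisymm hle (norm_nonneg _)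
      rw [h0] at hyz
      nlinarith
  have hRN : R * N + e * N = R := by
    have h1N : (1 : ℝ) - N ≠ 0 := by linarith
    rw [hR]; field_simp; ring
  -- rewrite the difference vector
  have hvec : ((⇑Q)^[k] y + d₁) - ((⇑Q)^[k] z + d₂) = (⇑Q)^[k] (y - z) + (d₁ - d₂) := by
    rw [hQsub]; abel
  set X := ‖(⇑Q)^[k] (y - z)‖ with hX
  have htri : X ≤ ‖((⇑Q)^[k] y + d₁) - ((⇑Q)^[k] z + d₂)‖ + ‖d₁ - d₂‖ := by
    rw [hvec]
    calc X = ‖((⇑Q)^[k] (y - z) + (d₁ - d₂)) + (-(d₁ - d₂))‖ := by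
          rw [hX]; congr 1; abel
    _ ≤ ‖(⇑Q)^[k] (y - z) + (d₁ - d₂)‖ + ‖-(d₁ - d₂)‖ := norm_add_le _ _
    _ = ‖(⇑Q)^[k] (y - z) + (d₁ - d₂)‖ + ‖d₁ - d₂‖ := by rw [norm_neg]
  have hkey : N * (R + e + αmax) < N * X := by
    have : R + N * αmax < N * X := lt_of_lt_of_le hyz hle
    nlinarith
  have hXgt : R + e + αmax < X := (mul_lt_mul_iff_right₀ hN0).mp hkey
  have hmain : R + αmax < ‖((⇑Q)^[k] y + d₁) - ((⇑Q)^[k] z + d₂)‖ := by linarith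
  exact ⟨hmain, by nlinarith⟩
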